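/- Let (W,S) be a Coxeter system, K ⊆ S, and 𝔍₀ ⊆ W_K an ideal of (W_K, ≤_L). Then 𝔍 = D_K·𝔍₀ = { dz : d ∈ D_K, z ∈ 𝔍₀ } is an ideal of (W, ≤_L); i.e., if s ∈ S and w ∈ D_K·𝔍₀ with l(sw) < l(w), then sw ∈ D_K·𝔍₀. -/

import Mathlib

open LaurentPolynomial Polynomial

noncomputable section

namespace WGI

/-- The ring `A = ℤ[q,q⁻¹]` of Laurent polynomials. -/
abbrev A : Type := LaurentPolynomial ℤ

/-- The indeterminate `q`. -/
def Q : A := LaurentPolynomial.T 1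

/-- The element `q⁻¹`. -/
def Qi : A := LaurentPolynomial.T (-1)

variable {B W : Type} [Group W] {M : CoxeterMatrix B} (cs : CoxeterSystem M W)

/-- One step of the relation generating the Bruhat order: `w = tu` for a reflection `t`
(or `t = 1`) and `l(u) ≤ l(w)`. -/
def BStep (u w : W) : Prop :=
  cs.length u ≤ cs.length w ∧ ∃ t : W, (cs.IsReflection t ∨ t = 1) ∧ w = t * u

/-- The Bruhat order on `W`: the transitive (and reflexive) closure of `BStep`. -/
def BrLe (u w : W) : Prop := Relation.ReflTransGen (BStep cs) u w

/-- Strict Bruhat order. -/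
def BrLt (u w : W) : Prop := BrLe cs u w ∧ u ≠ w

/-- The left weak order: `u ≤_L w` iff `l(wu⁻¹) = l(w) - l(u)`, i.e. `u` is a suffix of `w`. -/
def WkLe (u w : W) : Prop := cs.length (w * u⁻¹) + cs.length u = cs.length w

/-- Strict left weak order. -/
def WkLt (u w : W) : Prop := WkLe cs u w ∧ u ≠ w

/-- An ideal of `(W, ≤_L)`: a subset closed under taking suffixes. -/
def IsIdealWk (I : Set W) : Prop := ∀ u w : W, WkLe cs u w → w ∈ I → u ∈ I

/-- The set `D_J` of minimal left coset representatives of `W_J`. -/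
def DD (J : Set B) : Set W := { w | ∀ j ∈ J, cs.length w < cs.length (w * cs.simple j) }

/-- Strong ascent: `sw > w` and `sw ∈ I`. -/
def SA (I : Set W) (s : B) (w : W) : Prop :=
  cs.length w < cs.length (cs.simple s * w) ∧ cs.simple s * w ∈ I

/-- Strong descent: `sw < w`. -/
def SD (s : B) (w : W) : Prop := cs.length (cs.simple s * w) < cs.length w

/-- Weak ascent: `sw > w` and `sw ∈ D_J \ I`. -/
def WA (I : Set W) (J : Set B) (s : B) (w : W) : Prop :=
  cs.length w < cs.length (cs.simple s * w) ∧ cs.simple s * w ∈ DD cs J \ I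

/-- Weak descent: `sw > w` and `sw ∉ D_J`. -/
def WD (J : Set B) (s : B) (w : W) : Prop :=
  cs.length w < cs.length (cs.simple s * w) ∧ cs.simple s * w ∉ DD cs J

/-- Descents: strong or weak. -/
def Desc (J : Set B) (s : B) (w : W) : Prop := SD cs s w ∨ WD cs J s w

/-- Ascents: strong or weak. -/
def Asc (I : Set W) (J : Set B) (s : B) (w : W) : Prop := SA cs I s w ∨ WA cs I J s w

/-- The data making the ideal `I` (of the left weak order, contained in `D_J`) a
`W`-graph ideal with respect to `J`: an `H(W)`-module (a module together with operators
`T s` satisfying the quadratic and braid relations of the Hecke algebra) which is free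
over `A` with basis indexed by `I`, on which the generators act by the four-case formula
of Definition 5.2, together with a compatible semilinear bar involution fixing `b₁`. -/
structure WGModule (I : Set W) (J : Set B) where
  V : Type
  [acg : AddCommGroup V]
  [mod : Module A V]
  ideal : IsIdealWk cs I
  subset : I ⊆ DD cs J
  one_mem : (1 : W) ∈ I
  bas : Module.Basis I A V
  T : B → V →ₗ[A] V
  quad : ∀ s : B, (T s) ∘ₗ (T s) = LinearMap.id + (Q - Qi) • T s
  braid : ∀ s t : B,
    ((CoxeterSystem.alternatingWord s t (M s t)).map fun i => (T i : Module.End A V)).prod =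
    ((CoxeterSystem.alternatingWord t s (M s t)).map fun i => (T i : Module.End A V)).prod
  /-- the polynomials `r^s_{y,w}` (divided by `q`, as elements of `ℤ[q]` with zero constant
  term they are recorded in `qℤ[q]` via `r_const`); `r s w y` is `r^s_{y,w}`. -/
  r : B → I → (I →₀ Polynomial ℤ)
  r_const : ∀ (s : B) (w y : I), ((r s w) y).coeff 0 = 0
  r_supp : ∀ (s : B) (w y : I), (r s w) y ≠ 0 → BrLt cs (y : W) (cs.simple s * (w : W))
  act_SA : ∀ (s : B) (w : I) (h : SA cs I s (w : W)),
    T s (bas w) = bas ⟨cs.simple s * (w : W), h.2⟩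
  act_SD : ∀ (s : B) (w : I), SD cs s (w : W) → ∀ h' : cs.simple s * (w : W) ∈ I,
    T s (bas w) = bas ⟨cs.simple s * (w : W), h'⟩ + (Q - Qi) • bas w
  act_WD : ∀ (s : B) (w : I), WD cs J s (w : W) → T s (bas w) = -Qi • bas w
  act_WA : ∀ (s : B) (w : I), WA cs I J s (w : W) →
    T s (bas w) = Q • bas w - (r s w).sum fun y p => (Polynomial.toLaurent p) • bas y
  bar : V → V
  bar_add : ∀ x y : V, bar (x + y) = bar x + bar y
  bar_smul : ∀ (a : A) (x : V), bar (a • x) = (LaurentPolynomial.invert a) • bar x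
  bar_one : bar (bas ⟨(1 : W), one_mem⟩) = bas ⟨(1 : W), one_mem⟩
  bar_T : ∀ (s : B) (x : V), bar (T s x) = T s (bar x) - (Q - Qi) • bar x

attribute [instance] WGModule.acg WGModule.mod

/-- `I` is a `W`-graph ideal with respect to `J`. -/
def IsWGraphIdeal (I : Set W) (J : Set B) : Prop := Nonempty (WGModule cs I J)


open scoped Classical

open List CoxeterSystem



lemma ris_append (α β : List B) :
    cs.rightInvSeq (α ++ β) =
      (cs.rightInvSeq α).map (fun x => (cs.wordProd β)⁻¹ * x * cs.wordProd β)
        ++ cs.rightInvSeq β := by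
  induction α with
  | nil => simp [rightInvSeq]
  | cons i α ih =>
      show _ :: _ = _ :: _
      rw [List.cons_eq_cons]
      refine ⟨?_, ih⟩
      show (cs.wordProd (α ++ β))⁻¹ * cs.simple i * cs.wordProd (α ++ β) = _
      rw [wordProd_append, mul_inv_rev]
      group

lemma lis_eq_map_ris (ω : List B) :
    cs.leftInvSeq ω =
      (cs.rightInvSeq ω).map (fun x => cs.wordProd ω * x * (cs.wordProd ω)⁻¹) := by
  induction ω with
  | nil => simp
  | cons i ω ih =>
      show _ :: _ = _ :: _
      rw [List.cons_eq_cons]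
      constructor
      · rw [wordProd_cons, mul_inv_rev, inv_simple]
        have h := cs.simple_mul_simple_self i
        calc cs.simple i = cs.simple i * (cs.wordProd ω * (cs.wordProd ω)⁻¹) * (cs.simple i * cs.simple i) := by
              rw [mul_inv_cancel, h]; group
          _ = _ := by group
      · show _ = List.map _ (cs.rightInvSeq ω)
        rw [ih, map_map]
        apply List.map_congr_left
        intro x _
        simp only [Function.comp_apply, MulAut.conj_apply, wordProd_cons, mul_inv_rev, inv_simple]
        group




lemma helper_pow (i j : B) (a : ℕ) :
    (cs.simple j * cs.simple i) ^ a * cs.simple j = cs.simple j * (cs.simple i * cs.simple j) ^ a := by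
  induction a with
  | zero => simp
  | succ a ih =>
      calc (cs.simple j * cs.simple i) ^ (a+1) * cs.simple j
          = (cs.simple j * cs.simple i) * ((cs.simple j * cs.simple i) ^ a * cs.simple j) := by
            rw [pow_succ']; rw [mul_assoc]
        _ = (cs.simple j * cs.simple i) * (cs.simple j * (cs.simple i * cs.simple j) ^ a) := by
            rw [ih]
        _ = cs.simple j * ((cs.simple i * cs.simple j) * (cs.simple i * cs.simple j) ^ a) := by
            simp [mul_assoc]
        _ = cs.simple j * (cs.simple i * cs.simple j) ^ (a+1) := by rw [← pow_succ']

lemma key_conj (i j : B) (a : ℕ) :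
    ((cs.simple i * cs.simple j) ^ a)⁻¹ * (cs.simple j * (cs.simple i * cs.simple j) ^ a)
      = cs.simple j * (cs.simple i * cs.simple j) ^ (a + a) := by
  have h1 : ((cs.simple i * cs.simple j) ^ a)⁻¹ = (cs.simple j * cs.simple i) ^ a := by
    rw [← inv_pow, mul_inv_rev, inv_simple, inv_simple]
  rw [h1, ← mul_assoc, helper_pow, mul_assoc, ← pow_add]

lemma alt_inv_step (i j : B) (r : ℕ) :
    (cs.wordProd (alternatingWord i j r))⁻¹ * cs.wordProd (alternatingWord i j (r+1))
      = cs.simple j * (cs.simple i * cs.simple j) ^ r := by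
  rcases Nat.even_or_odd r with ⟨a, ha⟩ | ⟨a, ha⟩
  · subst ha
    rw [cs.prod_alternatingWord_eq_mul_pow, cs.prod_alternatingWord_eq_mul_pow]
    have h2 : ¬ Even (a + a + 1) := by rw [Nat.not_even_iff_odd]; exact ⟨a, by omega⟩
    have h3 : (a + a) / 2 = a := by omega
    have h4 : (a + a + 1) / 2 = a := by omega
    rw [if_pos ⟨a, rfl⟩, if_neg h2, h3, h4, one_mul]
    exact key_conj cs i j a
  · subst ha
    rw [cs.prod_alternatingWord_eq_mul_pow, cs.prod_alternatingWord_eq_mul_pow]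
    have h2 : ¬ Even (2 * a + 1) := by rw [Nat.not_even_iff_odd]; exact ⟨a, rfl⟩
    have h3 : (2 * a + 1) / 2 = a := by omega
    have h4 : (2 * a + 1 + 1) / 2 = a + 1 := by omega
    rw [if_neg h2, if_pos ⟨a+1, by omega⟩, h3, h4, one_mul, mul_inv_rev, inv_simple]
    calc ((cs.simple i * cs.simple j) ^ a)⁻¹ * cs.simple j * (cs.simple i * cs.simple j) ^ (a + 1)
        = ((cs.simple i * cs.simple j) ^ a)⁻¹ * (cs.simple j * (cs.simple i * cs.simple j) ^ a)
            * (cs.simple i * cs.simple j) := by rw [pow_succ]; group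
      _ = cs.simple j * (cs.simple i * cs.simple j) ^ (a + a) * (cs.simple i * cs.simple j) := by
            rw [key_conj cs i j a]
      _ = cs.simple j * (cs.simple i * cs.simple j) ^ (2 * a + 1) := by
            rw [mul_assoc, ← pow_succ]; congr 2; omega

lemma alt_drop (i j : B) (n k : ℕ) (h : k ≤ n) :
    (alternatingWord i j n).drop k = alternatingWord i j (n - k) := by
  induction k with
  | zero => simp
  | succ k ih =>
      have hk : k ≤ n := by omega
      have h1 : n - k = (n - (k+1)) + 1 := by omega
      have e1 : (alternatingWord i j n).drop (k+1) = ((alternatingWord i j n).drop k).drop 1 := by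
        rw [List.drop_drop, Nat.add_comm]
      rw [e1, ih hk, h1, alternatingWord_succ']
      simp

lemma getD_ris_eq (ω : List B) (k : ℕ) (h : k < ω.length) :
    (cs.rightInvSeq ω).getD k 1
      = (cs.wordProd (ω.drop (k+1)))⁻¹ * cs.wordProd (ω.drop k) := by
  rw [cs.getD_rightInvSeq]
  have hd : ω.drop k = ω[k] :: ω.drop (k+1) := List.drop_eq_getElem_cons h
  rw [hd, wordProd_cons]
  have : ω[k]? = some ω[k] := by
    rw [List.getElem?_eq_getElem h]
  rw [this]
  simp [mul_assoc]

lemma ris_alt_getD (i j : B) (n k : ℕ) (h : k < n) :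
    (cs.rightInvSeq (alternatingWord i j n)).getD k 1
      = cs.simple j * (cs.simple i * cs.simple j) ^ (n - k - 1) := by
  have hlen : (alternatingWord i j n).length = n := length_alternatingWord i j n
  rw [getD_ris_eq cs _ k (by omega), alt_drop i j n (k+1) (by omega),
    alt_drop i j n k (by omega)]
  have h1 : n - k = (n - k - 1) + 1 := by omega
  rw [h1]
  exact alt_inv_step cs i j (n - k - 1)





lemma count_ris_alt_even (i j : B) (m : ℕ) (hp : (cs.simple i * cs.simple j) ^ m = 1) (t : W) :
    Even (List.count t (cs.rightInvSeq (alternatingWord i j (2*m)))) := by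
  set l := cs.rightInvSeq (alternatingWord i j (2*m)) with hl
  have hlen : l.length = 2*m := by
    rw [hl, length_rightInvSeq, length_alternatingWord]
  have hhalf : l.take m = l.drop m := by
    apply List.ext_getElem
    · rw [List.length_take, List.length_drop, hlen]; omega
    · intro k h1 h2
      have hk : k < m := by rw [List.length_take, hlen] at h1; omega
      rw [List.getElem_take, List.getElem_drop]
      rw [← List.getD_eq_getElem l 1, ← List.getD_eq_getElem l 1, hl]
      rw [ris_alt_getD cs i j _ k (by omega), ris_alt_getD cs i j _ (m+k) (by omega)]
      have e1 : 2*m - k - 1 = (2*m - (m+k) - 1) + m := by omega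
      rw [e1, pow_add, hp, mul_one]
  have : List.count t l = List.count t (l.take m) + List.count t (l.drop m) := by
    conv_lhs => rw [← List.take_append_drop m l]
    rw [List.count_append]
  rw [this, hhalf]
  exact ⟨_, rfl⟩

noncomputable def sigmaf (i : B) : W × ℤˣ → W × ℤˣ :=
  fun p => (cs.simple i * p.1 * cs.simple i, if p.1 = cs.simple i then -p.2 else p.2)

lemma simple_conj_conj (i : B) (t : W) :
    cs.simple i * (cs.simple i * t * cs.simple i) * cs.simple i = t := by
  simp [mul_assoc, cs.simple_mul_simple_cancel_left, cs.simple_mul_simple_self]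

lemma sigmaf_involutive (i : B) : Function.Involutive (sigmaf cs i) := by
  rintro ⟨t, ε⟩
  by_cases h : t = cs.simple i
  · subst h
    simp [sigmaf, cs.simple_mul_simple_cancel_right, cs.simple_mul_simple_self]
  · have h2 : ¬ (cs.simple i * t * cs.simple i = cs.simple i) := by
      intro hc
      apply h
      have h3 := congrArg (fun x => cs.simple i * x * cs.simple i) hc
      rw [simple_conj_conj cs i t] at h3
      rw [cs.simple_mul_simple_self, one_mul] at h3
      exact h3
    simp [sigmaf, h, h2, simple_conj_conj cs i]

noncomputable def sigma (i : B) : Equiv.Perm (W × ℤˣ) := (sigmaf_involutive cs i).toPerm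

lemma sigma_apply (i : B) (t : W) (ε : ℤˣ) :
    sigma cs i (t, ε) = (cs.simple i * t * cs.simple i, if t = cs.simple i then -ε else ε) := rfl

lemma sigma_prod_apply (ρ : List B) (t : W) (ε : ℤˣ) :
    ((ρ.map (sigma cs)).prod) (t, ε)
      = (cs.wordProd ρ * t * (cs.wordProd ρ)⁻¹,
          (-1) ^ (List.count t (cs.rightInvSeq ρ)) * ε) := by
  induction ρ generalizing ε with
  | nil => simp [wordProd_nil]
  | cons i ρ ih =>
      rw [List.map_cons, List.prod_cons, Equiv.Perm.mul_apply, ih, sigma_apply, wordProd_cons]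
      have hfst : cs.simple i * (cs.wordProd ρ * t * (cs.wordProd ρ)⁻¹) * cs.simple i
          = cs.simple i * cs.wordProd ρ * t * (cs.simple i * cs.wordProd ρ)⁻¹ := by
        rw [mul_inv_rev, inv_simple]
        simp [mul_assoc]
      have hhead : cs.rightInvSeq (i :: ρ)
          = ((cs.wordProd ρ)⁻¹ * cs.simple i * cs.wordProd ρ) :: cs.rightInvSeq ρ := rfl
      by_cases h : cs.wordProd ρ * t * (cs.wordProd ρ)⁻¹ = cs.simple i
      · have ht : (cs.wordProd ρ)⁻¹ * cs.simple i * cs.wordProd ρ = t := by rw [← h]; group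
        have hc : List.count t (cs.rightInvSeq (i :: ρ)) = List.count t (cs.rightInvSeq ρ) + 1 := by
          rw [hhead, ht, List.count_cons_self]
        rw [if_pos h, hc]
        simp only [Prod.mk.injEq]
        refine ⟨hfst, ?_⟩
        rw [pow_succ, mul_assoc, neg_one_mul, mul_neg]
      · have ht : (cs.wordProd ρ)⁻¹ * cs.simple i * cs.wordProd ρ ≠ t := by
          intro hc
          apply h
          rw [← hc]
          group
        have hc : List.count t (cs.rightInvSeq (i :: ρ)) = List.count t (cs.rightInvSeq ρ) := by
          rw [hhead, List.count_cons_of_ne ht]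
        rw [if_neg h, hc]
        simp only [Prod.mk.injEq]
        exact ⟨hfst, trivial⟩

lemma alt_two_succ (i j : B) (m : ℕ) :
    alternatingWord i j (2*(m+1)) = i :: j :: alternatingWord i j (2*m) := by
  have h1 : 2*(m+1) = (2*m+1)+1 := by omega
  rw [h1, alternatingWord_succ', alternatingWord_succ']
  have h2 : ¬ Even (2*m+1) := by rw [Nat.not_even_iff_odd]; exact ⟨m, by omega⟩
  rw [if_neg h2, if_pos ⟨m, by omega⟩]

lemma sigma_pow (i j : B) (m : ℕ) :
    ((alternatingWord i j (2*m)).map (sigma cs)).prod = (sigma cs i * sigma cs j) ^ m := by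
  induction m with
  | zero => simp [alternatingWord]
  | succ m ih =>
      rw [alt_two_succ, List.map_cons, List.map_cons, List.prod_cons, List.prod_cons, ih,
        pow_succ', ← mul_assoc]

lemma sigma_liftable : M.IsLiftable (sigma cs) := by
  intro i j
  have hp : (cs.simple i * cs.simple j) ^ (M i j) = 1 := cs.simple_mul_simple_pow i j
  rw [← sigma_pow]
  apply Equiv.ext
  rintro ⟨t, ε⟩
  rw [sigma_prod_apply]
  have hπ : cs.wordProd (alternatingWord i j (2 * M i j)) = 1 := by
    rw [cs.prod_alternatingWord_eq_mul_pow, if_pos ⟨M i j, by omega⟩]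
    have h2 : 2 * M i j / 2 = M i j := by omega
    rw [h2, one_mul, hp]
  have hc := count_ris_alt_even cs i j (M i j) hp t
  rw [hπ, Even.neg_one_pow hc]
  simp

noncomputable def phi : W →* Equiv.Perm (W × ℤˣ) := cs.lift ⟨sigma cs, sigma_liftable cs⟩

lemma phi_simple (i : B) : phi cs (cs.simple i) = sigma cs i :=
  cs.lift_apply_simple (sigma_liftable cs) i

lemma phi_wordProd (ρ : List B) : phi cs (cs.wordProd ρ) = ((ρ.map (sigma cs)).prod) := by
  induction ρ with
  | nil => simp [wordProd_nil]
  | cons i ρ ih => rw [wordProd_cons, map_mul, ih, List.map_cons, List.prod_cons, phi_simple]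

lemma count_parity (ρ τ : List B) (h : cs.wordProd ρ = cs.wordProd τ) (t : W) :
    ((-1 : ℤˣ)) ^ (List.count t (cs.rightInvSeq ρ)) = (-1) ^ (List.count t (cs.rightInvSeq τ)) := by
  have h2 : ((ρ.map (sigma cs)).prod) (t, 1) = ((τ.map (sigma cs)).prod) (t, 1) := by
    rw [← phi_wordProd, ← phi_wordProd, h]
  rw [sigma_prod_apply, sigma_prod_apply] at h2
  have h3 := congrArg Prod.snd h2
  simpa using h3

theorem strong_exchange_right (ω : List B) (t : W) (ht : cs.IsReflection t)
    (hl : cs.length (cs.wordProd ω * t) < cs.length (cs.wordProd ω)) :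
    t ∈ cs.rightInvSeq ω := by
  by_contra hmem
  have hcount0 : List.count t (cs.rightInvSeq ω) = 0 := List.count_eq_zero.mpr hmem
  have htinv : t⁻¹ = t := ht.inv
  have htt : t * t = 1 := ht.mul_self
  obtain ⟨u, k, htk⟩ := ht
  obtain ⟨υ, hυlen, hυ⟩ := cs.exists_reduced_word u
  obtain ⟨τ, hτlen, hτ⟩ := cs.exists_reduced_word (cs.wordProd ω * t)
  set θ : List B := (υ ++ [k]) ++ υ.reverse with hθ
  have hk1 : cs.wordProd [k] = cs.simple k := by
    rw [wordProd_cons, wordProd_nil, mul_one]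
  have hπθ : cs.wordProd θ = t := by
    rw [hθ, wordProd_append, wordProd_append, wordProd_reverse, hk1, htk, ← hυ]
  have hrev : cs.wordProd υ.reverse = u⁻¹ := by rw [wordProd_reverse, hυ]
  -- counting in ris θ
  have hcntθ : List.count t (cs.rightInvSeq θ)
      = 2 * List.count (cs.simple k) (cs.rightInvSeq υ) + 1 := by
    rw [hθ, ris_append, ris_append, cs.rightInvSeq_singleton, hrev, hk1,
      List.map_append, List.map_map, List.count_append, List.count_append]
    have hf : ((fun x => (u⁻¹)⁻¹ * x * u⁻¹) ∘ fun x => (cs.simple k)⁻¹ * x * cs.simple k)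
        = fun x => u * (cs.simple k * x * cs.simple k) * u⁻¹ := by
      funext x
      simp only [Function.comp_apply, inv_inv, inv_simple]
    rw [hf]
    have hinj : Function.Injective (fun x : W => u * (cs.simple k * x * cs.simple k) * u⁻¹) := by
      intro a b hab
      dsimp only at hab
      have h1 := mul_right_cancel hab
      have h2 := mul_left_cancel h1
      have h3 := mul_right_cancel h2
      exact mul_left_cancel h3
    have hval : (fun x : W => u * (cs.simple k * x * cs.simple k) * u⁻¹) (cs.simple k) = t := by
      dsimp only
      rw [cs.simple_mul_simple_cancel_right, htk]
    have e1 : List.count t (List.map (fun x => u * (cs.simple k * x * cs.simple k) * u⁻¹)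
        (cs.rightInvSeq υ)) = List.count (cs.simple k) (cs.rightInvSeq υ) := by
      rw [← hval, List.count_map_of_injective _ _ hinj]
    have e2 : List.count t (List.map (fun x => (u⁻¹)⁻¹ * x * u⁻¹) [cs.simple k]) = 1 := by
      simp only [List.map_cons, List.map_nil, inv_inv]
      rw [show u * cs.simple k * u⁻¹ = t from htk.symm]
      simp
    have e3 : List.count t (cs.rightInvSeq υ.reverse)
        = List.count (cs.simple k) (cs.rightInvSeq υ) := by
      rw [cs.rightInvSeq_reverse, List.count_reverse, lis_eq_map_ris, ← hυ]
      have hinj2 : Function.Injective (fun x : W => u * x * u⁻¹) := by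
        intro a b hab
        dsimp only at hab
        exact mul_left_cancel (mul_right_cancel hab)
      have hval2 : (fun x : W => u * x * u⁻¹) (cs.simple k) = t := htk.symm
      rw [← hval2, List.count_map_of_injective _ _ hinj2]
    rw [e1, e2, e3]
    omega
  -- parity transfer to τ
  have hρτ : cs.wordProd (ω ++ θ) = cs.wordProd τ := by
    rw [wordProd_append, hπθ, ← hτ]
  have hpar := count_parity cs (ω ++ θ) τ hρτ t
  have hcntρ : List.count t (cs.rightInvSeq (ω ++ θ))
      = 2 * List.count (cs.simple k) (cs.rightInvSeq υ) + 1 := by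
    rw [ris_append, List.count_append, hcntθ, hπθ]
    have e4 : List.count t (List.map (fun x => t⁻¹ * x * t) (cs.rightInvSeq ω)) = 0 := by
      have hinj3 : Function.Injective (fun x : W => t⁻¹ * x * t) := by
        intro a b hab
        dsimp only at hab
        exact mul_left_cancel (mul_right_cancel hab)
      have hval3 : (fun x : W => t⁻¹ * x * t) t = t := by
        dsimp only
        rw [htinv, htt, one_mul]
      have h5 := List.count_map_of_injective (cs.rightInvSeq ω) _ hinj3 t
      have hv : t⁻¹ * t * t = t := by rw [inv_mul_cancel, one_mul]
      rw [hv] at h5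
      rw [h5, hcount0]
    rw [e4]
    omega
  rw [hcntρ] at hpar
  have hodd : ((-1 : ℤˣ)) ^ (2 * List.count (cs.simple k) (cs.rightInvSeq υ) + 1) = -1 := by
    rw [pow_succ, Even.neg_one_pow ⟨List.count (cs.simple k) (cs.rightInvSeq υ), two_mul _⟩, one_mul]
  rw [hodd] at hpar
  have hmemτ : t ∈ cs.rightInvSeq τ := by
    by_contra hmem2
    rw [List.count_eq_zero.mpr hmem2, pow_zero] at hpar
    exact absurd hpar (by decide)
  obtain ⟨n, hn, hget⟩ := List.mem_iff_getElem.mp hmemτ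
  have hgetD : (cs.rightInvSeq τ).getD n 1 = t := by
    rw [List.getD_eq_getElem _ _ hn, hget]
  have heq := cs.wordProd_mul_getD_rightInvSeq τ n
  rw [hgetD, ← hτ] at heq
  have heq2 : cs.wordProd ω = cs.wordProd (τ.eraseIdx n) := by
    rw [← heq, mul_assoc, htt, mul_one]
  have hlen2 : cs.length (cs.wordProd ω) ≤ (τ.eraseIdx n).length := by
    rw [heq2]; exact cs.length_wordProd_le _
  have hn2 : n < τ.length := by rwa [cs.length_rightInvSeq] at hn
  rw [List.length_eraseIdx_of_lt hn2] at hlen2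
  rw [CoxeterSystem.IsReduced, ← hτ] at hτlen
  omega

lemma reduce_word (ζ : List B) :
    ∃ ζ' : List B, (∀ b ∈ ζ', b ∈ ζ) ∧ cs.wordProd ζ' = cs.wordProd ζ ∧ cs.IsReduced ζ' := by
  generalize hn : ζ.length = n
  induction n using Nat.strong_induction_on generalizing ζ with
  | _ n ih =>
    by_cases hred : cs.IsReduced ζ
    · exact ⟨ζ, fun b hb => hb, rfl, hred⟩
    · have hex : ∃ k, ¬ cs.IsReduced (ζ.take (k+1)) := by
        refine ⟨ζ.length - 1, ?_⟩
        have hζne : ζ ≠ [] := by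
          intro h
          exact hred (by simp [h, CoxeterSystem.IsReduced, wordProd_nil])
        have hlen1 : 1 ≤ ζ.length := by
          cases ζ with
          | nil => exact absurd rfl hζne
          | cons a l => simp
        rw [show ζ.length - 1 + 1 = ζ.length by omega, List.take_length]
        exact hred
      set k := Nat.find hex with hkdef
      have hPk : ¬ cs.IsReduced (ζ.take (k+1)) := Nat.find_spec hex
      have htk_red : cs.IsReduced (ζ.take k) := by
        cases hk : k with
        | zero => simp [CoxeterSystem.IsReduced, wordProd_nil]
        | succ k' =>
            have := Nat.find_min hex (by omega : k' < k)
            rw [not_not] at this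
            exact this
      have hk_lt : k < ζ.length := by
        by_contra hc
        push_neg at hc
        rw [List.take_of_length_le (by omega)] at hPk
        rw [List.take_of_length_le (by omega)] at htk_red
        exact hPk htk_red
      have htklen : (ζ.take k).length = k := by
        rw [List.length_take]; omega
      have hx : cs.length (cs.wordProd (ζ.take k)) = k := by
        rw [htk_red, htklen]
      have htake1 : ζ.take (k+1) = ζ.take k ++ [ζ[k]] := (List.take_concat_get' ζ k hk_lt).symm
      have hπ1 : cs.wordProd (ζ.take (k+1)) = cs.wordProd (ζ.take k) * cs.simple ζ[k] := by
        rw [htake1, wordProd_append, wordProd_cons, wordProd_nil, mul_one]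
      have hlt : cs.length (cs.wordProd (ζ.take k) * cs.simple ζ[k]) < k := by
        have h1 : cs.length (cs.wordProd (ζ.take (k+1))) ≤ k + 1 := by
          have := cs.length_wordProd_le (ζ.take (k+1))
          rwa [List.length_take, min_eq_left (by omega)] at this
        have h2 : cs.length (cs.wordProd (ζ.take (k+1))) ≠ k + 1 := by
          intro hc
          apply hPk
          unfold CoxeterSystem.IsReduced
          rw [hc, List.length_take, min_eq_left (by omega)]
        have h3 := cs.length_mul_simple_ne (cs.wordProd (ζ.take k)) ζ[k]
        rw [hπ1] at h1 h2
        omega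
      have hmem := strong_exchange_right cs (ζ.take k) (cs.simple ζ[k])
        (cs.isReflection_simple ζ[k]) (by rw [hx]; exact hlt)
      obtain ⟨m, hm, hget⟩ := List.mem_iff_getElem.mp hmem
      have hm2 : m < (ζ.take k).length := by rwa [cs.length_rightInvSeq] at hm
      have heq := cs.wordProd_mul_getD_rightInvSeq (ζ.take k) m
      rw [List.getD_eq_getElem _ _ hm, hget] at heq
      set ζ₀ : List B := (ζ.take k).eraseIdx m ++ ζ.drop (k+1) with hζ₀
      have hπζ₀ : cs.wordProd ζ₀ = cs.wordProd ζ := by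
        rw [hζ₀, wordProd_append, ← heq, ← hπ1, ← wordProd_append, List.take_append_drop]
      have hlenζ₀ : ζ₀.length < n := by
        rw [hζ₀, List.length_append, List.length_eraseIdx_of_lt hm2, htklen, List.length_drop]
        omega
      obtain ⟨ζ', hmemζ', hπζ', hredζ'⟩ := ih ζ₀.length (by omega) ζ₀ rfl
      refine ⟨ζ', ?_, by rw [hπζ', hπζ₀], hredζ'⟩
      intro b hb
      rcases List.mem_append.mp (hmemζ' b hb) with h | h
      · exact List.take_subset k ζ ((List.eraseIdx_sublist (ζ.take k) m).subset h)
      · exact List.drop_subset (k+1) ζ h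


section Kpart

variable (K : Set B)

lemma exists_Kword (z : W) (hz : z ∈ Subgroup.closure (cs.simple '' K)) :
    ∃ ζ : List B, (∀ b ∈ ζ, b ∈ K) ∧ cs.wordProd ζ = z := by
  induction hz using Subgroup.closure_induction with
  | mem x hx =>
      obtain ⟨j, hj, rfl⟩ := hx
      exact ⟨[j], by simpa using hj, by rw [wordProd_cons, wordProd_nil, mul_one]⟩
  | one => exact ⟨[], by simp, cs.wordProd_nil⟩
  | mul x y hx hy ihx ihy =>
      obtain ⟨ζ₁, h1, e1⟩ := ihx
      obtain ⟨ζ₂, h2, e2⟩ := ihy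
      refine ⟨ζ₁ ++ ζ₂, ?_, by rw [wordProd_append, e1, e2]⟩
      intro b hb
      rcases List.mem_append.mp hb with h | h
      exacts [h1 b h, h2 b h]
  | inv x hx ihx =>
      obtain ⟨ζ₁, h1, e1⟩ := ihx
      exact ⟨ζ₁.reverse, fun b hb => h1 b (List.mem_reverse.mp hb), by rw [wordProd_reverse, e1]⟩

lemma exists_reduced_Kword (z : W) (hz : z ∈ Subgroup.closure (cs.simple '' K)) :
    ∃ ζ : List B, (∀ b ∈ ζ, b ∈ K) ∧ cs.wordProd ζ = z ∧ cs.IsReduced ζ := by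
  obtain ⟨ζ, hK, hπ⟩ := exists_Kword cs K z hz
  obtain ⟨ζ', hmem, hπ', hred⟩ := reduce_word cs ζ
  exact ⟨ζ', fun b hb => hK b (hmem b hb), by rw [hπ', hπ], hred⟩

lemma wordProd_mem_closure (ζ : List B) (h : ∀ b ∈ ζ, b ∈ K) :
    cs.wordProd ζ ∈ Subgroup.closure (cs.simple '' K) := by
  induction ζ with
  | nil => rw [wordProd_nil]; exact one_mem _
  | cons i ζ ih =>
      rw [wordProd_cons]
      exact mul_mem (Subgroup.subset_closure ⟨i, h i (List.mem_cons_self), rfl⟩)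
        (ih fun b hb => h b (List.mem_cons_of_mem i hb))

lemma simple_mem_closure {j : B} (hj : j ∈ K) :
    cs.simple j ∈ Subgroup.closure (cs.simple '' K) :=
  Subgroup.subset_closure ⟨j, hj, rfl⟩

/-- `d` has minimal length in the coset `d * W_K`. -/
def MinRep (d : W) : Prop := ∀ z ∈ Subgroup.closure (cs.simple '' K), cs.length d ≤ cs.length (d * z)

lemma length_add_of_minRep {d : W} (hd : MinRep cs K d) {z : W}
    (hz : z ∈ Subgroup.closure (cs.simple '' K)) :
    cs.length (d * z) = cs.length d + cs.length z := by
  generalize hn : cs.length z = n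
  induction n using Nat.strong_induction_on generalizing z with
  | _ n ih =>
    obtain ⟨ζ, hKζ, hπζ, hredζ⟩ := exists_reduced_Kword cs K z hz
    rcases List.eq_nil_or_concat ζ with hζ | ⟨l, j, hζ⟩
    · subst hζ
      rw [← hπζ, wordProd_nil] at hn ⊢
      simp [← hn]
    · rw [List.concat_eq_append] at hζ
      subst hζ
      have hj : j ∈ K := hKζ j (by simp)
      have hlK : ∀ b ∈ l, b ∈ K := fun b hb => hKζ b (by simp [hb])
      have hredl : cs.IsReduced l := by
        have := CoxeterSystem.IsReduced.take hredζ l.length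
        rwa [List.take_left] at this
      set z' : W := cs.wordProd l with hz'
      have hz'G : z' ∈ Subgroup.closure (cs.simple '' K) := wordProd_mem_closure cs K l hlK
      have hzz : z = z' * cs.simple j := by
        rw [← hπζ, hz', wordProd_append, wordProd_cons, wordProd_nil, mul_one]
      have hlen_z : cs.length z = l.length + 1 := by
        rw [← hπζ, hredζ, List.length_append, List.length_cons, List.length_nil]
      have hlen_z' : cs.length z' = l.length := by rw [hz', hredl]
      have ihz' : cs.length (d * z') = cs.length d + cs.length z' :=
        ih (cs.length z') (by omega) hz'G rfl
      have hne := cs.length_mul_simple_ne (d * z') j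
      rcases cs.length_mul_simple (d * z') j with hcase | hcase
      · rw [hzz, ← mul_assoc, hcase, ihz']
        omega
      · exfalso
        obtain ⟨δ, hδlen, hδ⟩ := cs.exists_reduced_word d
        have hω : cs.wordProd (δ ++ l) = d * z' := by rw [wordProd_append, ← hδ, hz']
        have hmem := strong_exchange_right cs (δ ++ l) (cs.simple j)
          (cs.isReflection_simple j) (by rw [hω]; omega)
        obtain ⟨m, hm, hget⟩ := List.mem_iff_getElem.mp hmem
        have hm2 : m < (δ ++ l).length := by rwa [cs.length_rightInvSeq] at hm
        have heq := cs.wordProd_mul_getD_rightInvSeq (δ ++ l) m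
        rw [List.getD_eq_getElem _ _ hm, hget, hω] at heq
        by_cases hmδ : m < δ.length
        · rw [List.eraseIdx_append_of_lt_length hmδ, wordProd_append] at heq
          have hconjG : z' * cs.simple j * z'⁻¹ ∈ Subgroup.closure (cs.simple '' K) :=
            mul_mem (mul_mem hz'G (simple_mem_closure cs K hj)) (inv_mem hz'G)
          have hde : d * (z' * cs.simple j * z'⁻¹) = cs.wordProd (δ.eraseIdx m) := by
            rw [show d * (z' * cs.simple j * z'⁻¹) = d * z' * cs.simple j * z'⁻¹ by group, heq,
              mul_inv_cancel_right]
          have hmin := hd _ hconjG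
          rw [hde] at hmin
          have hle := cs.length_wordProd_le (δ.eraseIdx m)
          rw [List.length_eraseIdx_of_lt hmδ] at hle; rw [CoxeterSystem.IsReduced, ← hδ] at hδlen
          omega
        · push_neg at hmδ
          rw [List.eraseIdx_append_of_length_le hmδ, wordProd_append, ← hδ, mul_assoc] at heq
          have hzeq : z' * cs.simple j = cs.wordProd (l.eraseIdx (m - δ.length)) :=
            mul_left_cancel heq
          have hle := cs.length_wordProd_le (l.eraseIdx (m - δ.length))
          have hmel : m - δ.length < l.length := by
            rw [List.length_append] at hm2; omega
          rw [← hzeq, ← hzz, List.length_eraseIdx_of_lt hmel] at hle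
          omega

lemma minRep_of_DD {d : W} (hd : d ∈ DD cs K) : MinRep cs K d := by
  have hP : ∃ n, ∃ y ∈ Subgroup.closure (cs.simple '' K), cs.length (d * y) = n :=
    ⟨cs.length d, 1, one_mem _, by rw [mul_one]⟩
  obtain ⟨y₀, hy₀G, hy₀len⟩ := Nat.find_spec hP
  have hmin : ∀ z ∈ Subgroup.closure (cs.simple '' K), Nat.find hP ≤ cs.length (d * z) :=
    fun z hzG => Nat.find_min' hP ⟨z, hzG, rfl⟩
  have hMRe : MinRep cs K (d * y₀) := by
    intro z hzG
    rw [hy₀len, mul_assoc]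
    exact hmin _ (mul_mem hy₀G hzG)
  have hyinvG : y₀⁻¹ ∈ Subgroup.closure (cs.simple '' K) := inv_mem hy₀G
  have hdlen : cs.length d = cs.length (d * y₀) + cs.length y₀⁻¹ := by
    have := length_add_of_minRep cs K hMRe hyinvG
    rwa [mul_assoc, mul_inv_cancel, mul_one] at this
  by_cases hy1 : y₀⁻¹ = 1
  · have hy1' : y₀ = 1 := by rwa [inv_eq_one] at hy1
    subst hy1'
    intro z hzG
    have := hMRe z hzG
    rwa [mul_one] at this
  · exfalso
    obtain ⟨ζ, hKζ, hπζ, hredζ⟩ := exists_reduced_Kword cs K y₀⁻¹ hyinvG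
    rcases List.eq_nil_or_concat ζ with hζ | ⟨l, j, hζ⟩
    · subst hζ; exact hy1 (by rw [← hπζ, wordProd_nil])
    · rw [List.concat_eq_append] at hζ
      subst hζ
      have hj : j ∈ K := hKζ j (by simp)
      have hlK : ∀ b ∈ l, b ∈ K := fun b hb => hKζ b (by simp [hb])
      have hredl : cs.IsReduced l := by
        have := CoxeterSystem.IsReduced.take hredζ l.length
        rwa [List.take_left] at this
      have hlG : cs.wordProd l ∈ Subgroup.closure (cs.simple '' K) :=
        wordProd_mem_closure cs K l hlK
      have hyprod : y₀⁻¹ = cs.wordProd l * cs.simple j := by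
        rw [← hπζ, wordProd_append, wordProd_cons, wordProd_nil, mul_one]
      have hdsj : d * cs.simple j = (d * y₀) * cs.wordProd l := by
        calc d * cs.simple j = (d * y₀) * (y₀⁻¹ * cs.simple j) := by group
          _ = (d * y₀) * (cs.wordProd l * cs.simple j * cs.simple j) := by
              rw [hyprod]
          _ = (d * y₀) * cs.wordProd l := by rw [cs.simple_mul_simple_cancel_right]
      have h1 : cs.length (d * cs.simple j) = cs.length (d * y₀) + l.length := by
        rw [hdsj, length_add_of_minRep cs K hMRe hlG, hredl]
      have h2 : cs.length y₀⁻¹ = l.length + 1 := by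
        rw [← hπζ, hredζ, List.length_append, List.length_cons, List.length_nil]
      have h3 := hd j hj
      omega

lemma length_add_of_DD {d z : W} (hd : d ∈ DD cs K)
    (hz : z ∈ Subgroup.closure (cs.simple '' K)) :
    cs.length (d * z) = cs.length d + cs.length z :=
  length_add_of_minRep cs K (minRep_of_DD cs K hd) hz

lemma step_lemma (I0 : Set W)
    (hsub : I0 ⊆ (Subgroup.closure (cs.simple '' K) : Set W))
    (hI0 : IsIdealWk cs I0) (i : B) (d z : W) (hd : d ∈ DD cs K) (hz : z ∈ I0)
    (hlt : cs.length (cs.simple i * (d * z)) < cs.length (d * z)) :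
    ∃ d' ∈ DD cs K, ∃ z' ∈ I0, cs.simple i * (d * z) = d' * z' := by
  have hzG : z ∈ Subgroup.closure (cs.simple '' K) := hsub hz
  have hne := cs.length_simple_mul_ne d i
  rcases cs.length_simple_mul d i with hcase | hcase
  · -- ascent of d
    by_cases hsd : cs.simple i * d ∈ DD cs K
    · exfalso
      have h1 : cs.length ((cs.simple i * d) * z) = cs.length d + 1 + cs.length z := by
        rw [length_add_of_DD cs K hsd hzG, hcase]
      have h2 : cs.length (d * z) = cs.length d + cs.length z := length_add_of_DD cs K hd hzG
      rw [← mul_assoc] at hlt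
      omega
    · have hsd' : ∃ j ∈ K, ¬ cs.length (cs.simple i * d)
          < cs.length (cs.simple i * d * cs.simple j) := by
        by_contra hc
        push_neg at hc
        exact hsd fun j hj => hc j hj
      obtain ⟨j, hj, hnlt⟩ := hsd'
      push_neg at hnlt
      have hne2 := cs.length_mul_simple_ne (cs.simple i * d) j
      obtain ⟨δ, hδlen, hδ⟩ := cs.exists_reduced_word d
      have hω : cs.wordProd (i :: δ) = cs.simple i * d := by rw [wordProd_cons, ← hδ]
      have hmem := strong_exchange_right cs (i :: δ) (cs.simple j)
        (cs.isReflection_simple j) (by rw [hω]; omega)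
      obtain ⟨m, hm, hget⟩ := List.mem_iff_getElem.mp hmem
      have hm2 : m < (i :: δ).length := by rwa [cs.length_rightInvSeq] at hm
      have heq := cs.wordProd_mul_getD_rightInvSeq (i :: δ) m
      rw [List.getD_eq_getElem _ _ hm, hget, hω] at heq
      cases m with
      | zero =>
          rw [show (i :: δ).eraseIdx 0 = δ from rfl, ← hδ] at heq
          have hswap : cs.simple i * d = d * cs.simple j := by
            calc cs.simple i * d = (cs.simple i * d * cs.simple j) * cs.simple j := by
                  rw [cs.simple_mul_simple_cancel_right]
              _ = d * cs.simple j := by rw [heq]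
          set z₂ := cs.simple j * z with hz₂
          have hz₂G : z₂ ∈ Subgroup.closure (cs.simple '' K) :=
            mul_mem (simple_mem_closure cs K hj) hzG
          have hfin : cs.simple i * (d * z) = d * z₂ := by
            rw [← mul_assoc, hswap, hz₂, mul_assoc]
          have h2 : cs.length (d * z) = cs.length d + cs.length z :=
            length_add_of_DD cs K hd hzG
          have h3 : cs.length (d * z₂) = cs.length d + cs.length z₂ :=
            length_add_of_DD cs K hd hz₂G
          have hz₂lt : cs.length z₂ < cs.length z := by
            rw [hfin] at hlt
            omega
          have hz₂len : cs.length z₂ + 1 = cs.length z := by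
            have hne3 := cs.length_simple_mul_ne z j
            rcases cs.length_simple_mul z j with hc | hc <;> rw [← hz₂] at hc <;> omega
          have hwk : WkLe cs z₂ z := by
            unfold WkLe
            have hzz₂ : z * z₂⁻¹ = cs.simple j := by
              rw [hz₂, mul_inv_rev, inv_simple, ← mul_assoc, mul_inv_cancel, one_mul]
            rw [hzz₂, cs.length_simple]
            omega
          exact ⟨d, hd, z₂, hI0 z₂ z hwk hz, hfin⟩
      | succ m' =>
          exfalso
          have hm3 : m' < δ.length := by simpa using hm2
          rw [show (i :: δ).eraseIdx (m'+1) = i :: δ.eraseIdx m' from rfl, wordProd_cons] at heq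
          have heq2 : d * cs.simple j = cs.wordProd (δ.eraseIdx m') := by
            apply mul_left_cancel (a := cs.simple i)
            rw [← mul_assoc]
            exact heq
          have hle := cs.length_wordProd_le (δ.eraseIdx m')
          rw [← heq2, List.length_eraseIdx_of_lt hm3, ← hδlen, ← hδ] at hle
          have h4 := hd j hj
          omega
  · -- descent of d
    have hsdDD : cs.simple i * d ∈ DD cs K := by
      intro j hj
      have h1 := hd j hj
      have h2 := cs.length_simple_mul (d * cs.simple j) i
      have hne4 := cs.length_simple_mul_ne (d * cs.simple j) i
      rw [mul_assoc]
      rcases h2 with hc | hc <;> omega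
    exact ⟨cs.simple i * d, hsdDD, z, hz, by rw [mul_assoc]⟩

end Kpart

theorem main_ideal (K : Set B) (I0 : Set W)
    (hsub : I0 ⊆ (Subgroup.closure (cs.simple '' K) : Set W))
    (hI0 : IsIdealWk cs I0) :
    IsIdealWk cs {w : W | ∃ d ∈ DD cs K, ∃ z ∈ I0, w = d * z} := by
  suffices H : ∀ n : ℕ, ∀ u w : W, cs.length w ≤ n → WkLe cs u w →
      w ∈ {w : W | ∃ d ∈ DD cs K, ∃ z ∈ I0, w = d * z} →
      u ∈ {w : W | ∃ d ∈ DD cs K, ∃ z ∈ I0, w = d * z} by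
    intro u w huw hw
    exact H (cs.length w) u w le_rfl huw hw
  intro n
  induction n with
  | zero =>
      intro u w hlen huw hw
      have hw1 : w = 1 := by
        rw [← cs.length_eq_zero_iff]
        omega
      have hwk : cs.length (w * u⁻¹) + cs.length u = cs.length w := huw
      have hu1 : u = 1 := by
        rw [← cs.length_eq_zero_iff]
        omega
      rwa [hu1, ← hw1]
  | succ n ih =>
      intro u w hlen huw hw
      by_cases heq : u = w
      · rwa [heq]
      · have hwk : cs.length (w * u⁻¹) + cs.length u = cs.length w := huw
        have hne1 : w * u⁻¹ ≠ 1 := by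
          intro hc
          exact heq (mul_inv_eq_one.mp hc).symm
        have hlen1 : 1 ≤ cs.length (w * u⁻¹) := by
          by_contra hc
          push_neg at hc
          exact hne1 (cs.length_eq_zero_iff.mp (by omega))
        obtain ⟨ρ, hρlen, hρ⟩ := cs.exists_reduced_word (w * u⁻¹)
        cases hρcase : ρ with
        | nil => rw [hρcase] at hρ; rw [hρ, wordProd_nil, cs.length_one] at hlen1; omega
        | cons i ρ' =>
            rw [hρcase] at hρ hρlen
            have hρ'red : cs.IsReduced ρ' := by
              have h := CoxeterSystem.IsReduced.drop (cs := cs) (ω := i :: ρ') (j := 1) ?_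
              · simpa using h
              · unfold CoxeterSystem.IsReduced
                rw [← hρ]
                rw [hρ]; exact hρlen
            have hπρ' : cs.wordProd ρ' = cs.simple i * (w * u⁻¹) := by
              rw [hρ, wordProd_cons, ← mul_assoc, cs.simple_mul_simple_self, one_mul]
            have hℓρ' : cs.length (cs.simple i * (w * u⁻¹)) = cs.length (w * u⁻¹) - 1 := by
              rw [← hπρ', hρ'red]
              rw [CoxeterSystem.IsReduced, ← hρ, List.length_cons] at hρlen
              omega
            set w₂ := cs.simple i * w with hw₂
            have hw₂u : w₂ * u⁻¹ = cs.simple i * (w * u⁻¹) := by rw [hw₂, mul_assoc]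
            have hup : cs.length w₂ ≤ cs.length w - 1 := by
              have hb : cs.length ((w₂ * u⁻¹) * u) ≤ cs.length (w₂ * u⁻¹) + cs.length u :=
                cs.length_mul_le _ _
              rw [mul_assoc, inv_mul_cancel, mul_one] at hb
              rw [hw₂u, hℓρ'] at hb
              omega
            have hdown := cs.length_simple_mul_ne w i
            have hw₂len : cs.length w₂ + 1 = cs.length w := by
              have := cs.length_simple_mul w i
              rw [← hw₂] at this
              rcases this with hc | hc <;> omega
            have hlt : cs.length (cs.simple i * w) < cs.length w := by
              rw [← hw₂]
              omega
            obtain ⟨d, hd, z, hz, hwzd⟩ := hw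
            have hstep := step_lemma cs K I0 hsub hI0 i d z hd hz (by rw [← hwzd]; exact hlt)
            obtain ⟨d', hd', z', hz', hw₂eq⟩ := hstep
            have hw₂mem : w₂ ∈ {w : W | ∃ d ∈ DD cs K, ∃ z ∈ I0, w = d * z} := by
              refine ⟨d', hd', z', hz', ?_⟩
              rw [hw₂, hwzd]
              exact hw₂eq
            have hwk₂ : WkLe cs u w₂ := by
              show cs.length (w₂ * u⁻¹) + cs.length u = cs.length w₂
              rw [hw₂u, hℓρ']
              omega
            exact ih u w₂ (by omega) hwk₂ hw₂mem



/-- `D_K · 𝔍₀` is an ideal of `(W, ≤_L)`. -/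
theorem stmt15 (K : Set B) (I0 : Set W)
    (hsub : I0 ⊆ (Subgroup.closure (cs.simple '' K) : Set W))
    (hI0 : IsIdealWk cs I0) :
    IsIdealWk cs {w : W | ∃ d ∈ DD cs K, ∃ z ∈ I0, w = d * z} :=
  main_ideal cs K I0 hsub hI0

end WGI
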